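/- The graph T_k consisting of k nested triangles, with consecutive triangles joined by a 6-cycle of edges, is 3-connected and, in the embedding with the outermost triangle as outer face, has exactly k onion peels, the i-th peel being the i-th triangle from the outside. -/

import Mathlib

open Set Topology

/-- `A` is a simple arc from `p` to `q` in the plane. -/
def IsArc (A : Set (ℝ × ℝ)) (p q : ℝ × ℝ) : Prop :=
  ∃ f : ℝ → ℝ × ℝ, ContinuousOn f (Icc 0 1) ∧ InjOn f (Icc 0 1) ∧
    f 0 = p ∧ f 1 = q ∧ f '' Icc 0 1 = A

/-- A (topological) planar drawing of a simple graph `G`: vertices are placed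
injectively in the plane, every edge is drawn as a simple arc between the
positions of its endpoints, two distinct edges meet only in the positions of
their common endpoints, and no vertex lies on an arc except at its own edges. -/
structure PlanarDrawing {V : Type} (G : SimpleGraph V) : Type where
  pos : V → ℝ × ℝ
  pos_inj : Function.Injective pos
  arc : Sym2 V → Set (ℝ × ℝ)
  arc_isArc : ∀ e ∈ G.edgeSet, ∃ u v : V, e = s(u, v) ∧ IsArc (arc e) (pos u) (pos v)
  arc_inter_arc : ∀ e ∈ G.edgeSet, ∀ f ∈ G.edgeSet, e ≠ f →
    arc e ∩ arc f ⊆ pos '' {v : V | v ∈ e ∧ v ∈ f}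
  arc_pos : ∀ e ∈ G.edgeSet, ∀ v : V, pos v ∈ arc e → v ∈ e

namespace PlanarDrawing

variable {V : Type} {G : SimpleGraph V} (D : PlanarDrawing G)

/-- The set of points of the plane covered by the drawing. -/
def drawnSet : Set (ℝ × ℝ) := Set.range D.pos ∪ ⋃ e ∈ G.edgeSet, D.arc e

/-- The faces of the drawing: connected components of the complement. -/
def IsFace (F : Set (ℝ × ℝ)) : Prop :=
  ∃ x ∉ D.drawnSet, F = connectedComponentIn D.drawnSetᶜ x

/-- The outer face: an unbounded face. -/
def IsOuterFace (F : Set (ℝ × ℝ)) : Prop := D.IsFace F ∧ ¬ Bornology.IsBounded F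

/-- A vertex lies on the outer face. -/
def OnOuter (v : V) : Prop := ∃ F, D.IsOuterFace F ∧ D.pos v ∈ closure F

/-- A vertex is incident to a face if its position is in the closure of the face. -/
def Incident (v : V) (F : Set (ℝ × ℝ)) : Prop := D.pos v ∈ closure F

private lemma induce_edge_mem {S : Set V} {e : Sym2 ↥S}
    (he : e ∈ (G.induce S).edgeSet) : Sym2.map (Subtype.val) e ∈ G.edgeSet := by
  induction e using Sym2.ind with
  | _ a b =>
    rw [Sym2.map_pair_eq, SimpleGraph.mem_edgeSet]
    simpa using he

/-- Restriction of a drawing to the subgraph induced on `S` (erase all other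
vertices and edges, keep the rest of the drawing unchanged). -/
def restrict (S : Set V) : PlanarDrawing (G.induce S) where
  pos v := D.pos v.val
  pos_inj := D.pos_inj.comp Subtype.val_injective
  arc e := D.arc (Sym2.map Subtype.val e)
  arc_isArc := by
    intro e he
    induction e using Sym2.ind with
    | _ a b =>
      obtain ⟨u, v, huv, harc⟩ := D.arc_isArc _ (induce_edge_mem he)
      rw [Sym2.map_pair_eq] at huv
      rw [Sym2.eq_iff] at huv
      rcases huv with ⟨h1, h2⟩ | ⟨h1, h2⟩
      · refine ⟨a, b, rfl, ?_⟩
        show IsArc (D.arc (Sym2.map Subtype.val s(a, b))) (D.pos ↑a) (D.pos ↑b)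
        rw [← h1, ← h2] at harc; exact harc
      · refine ⟨b, a, Sym2.eq_swap, ?_⟩
        show IsArc (D.arc (Sym2.map Subtype.val s(a, b))) (D.pos ↑b) (D.pos ↑a)
        rw [← h1, ← h2] at harc; exact harc
  arc_inter_arc := by
    intro e he f hf hef x hx
    have hmapne : Sym2.map (Subtype.val : S → V) e ≠ Sym2.map Subtype.val f :=
      fun h => hef (Sym2.map.injective Subtype.val_injective h)
    obtain ⟨w, ⟨hw1, hw2⟩, hwx⟩ :=
      D.arc_inter_arc _ (induce_edge_mem he) _ (induce_edge_mem hf) hmapne hx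
    rw [Sym2.mem_map] at hw1 hw2
    obtain ⟨a, ha, rfl⟩ := hw1
    obtain ⟨b, hb, hba⟩ := hw2
    have : b = a := Subtype.val_injective hba
    subst this
    exact ⟨b, ⟨ha, hb⟩, hwx⟩
  arc_pos := by
    intro e he v hv
    have := D.arc_pos _ (induce_edge_mem he) v.val hv
    rw [Sym2.mem_map] at this
    obtain ⟨a, ha, hav⟩ := this
    have : a = v := Subtype.val_injective hav
    subst this
    exact ha

/-- The vertices of `S` lying on the outer face of the drawing restricted to `S`. -/
def peelSet (S : Set V) : Set V :=
  {v : V | ∃ h : v ∈ S, (D.restrict S).OnOuter ⟨v, h⟩}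

/-- The vertices remaining after `n` rounds of removing the outer-face vertices. -/
def remaining (D : PlanarDrawing G) : ℕ → Set V
  | 0 => Set.univ
  | n + 1 => remaining D n \ D.peelSet (remaining D n)

/-- The `(i+1)`-st onion peel `L_{i+1}` of the drawing. -/
def peel (i : ℕ) : Set V := D.peelSet (D.remaining i)

/-- A face is a triangle: bounded by the arcs of three mutually adjacent vertices. -/
def IsTriangleFace (F : Set (ℝ × ℝ)) : Prop :=
  ∃ u v w : V, u ≠ v ∧ u ≠ w ∧ v ≠ w ∧ G.Adj u v ∧ G.Adj u w ∧ G.Adj v w ∧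
    frontier F = D.arc s(u, v) ∪ D.arc s(u, w) ∪ D.arc s(v, w)

/-- A drawing is a triangulation if every face (including the outer one) is a triangle. -/
def IsTriangulation : Prop := ∀ F, D.IsFace F → D.IsTriangleFace F

/-- A triangulated disk: every inner (bounded) face is a triangle and the outer
face is bounded by a simple cycle of the graph. -/
def IsTriangulatedDisk : Prop :=
  (∀ F, D.IsFace F → Bornology.IsBounded F → D.IsTriangleFace F) ∧
  ∀ F, D.IsOuterFace F → ∃ (v : V) (c : G.Walk v v), c.IsCycle ∧
    frontier F = ⋃ e ∈ c.edges, D.arc e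

/-- `F` is an outer-face-rooted spanning forest of the drawn graph: a spanning
acyclic subgraph each of whose components contains exactly one outer-face vertex. -/
def IsOuterRootedForest (F : SimpleGraph V) : Prop :=
  F ≤ G ∧ F.IsAcyclic ∧ ∀ v : V, ∃! r : V, D.OnOuter r ∧ F.Reachable v r

/-- The forest has height at most `h`: every vertex is within distance `h` (in `F`)
of an outer-face vertex. -/
def ForestHeightLE (F : SimpleGraph V) (h : ℕ) : Prop :=
  ∀ v : V, ∃ r : V, D.OnOuter r ∧ F.Reachable v r ∧ F.dist v r ≤ h

end PlanarDrawing

/-- `G` is `k`-outerplanar: it has a planar drawing with at most `k` onion peels. -/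
def KOuterplanar {V : Type} (G : SimpleGraph V) (k : ℕ) : Prop :=
  ∃ D : PlanarDrawing G, D.remaining k = ∅

/-- `k` nested triangles, consecutive ones joined by a 6-cycle: triangle `i`
has vertices `(i, 0), (i, 1), (i, 2)`, and each vertex of triangle `i+1` is
joined to two vertices of triangle `i` (triangle `0` is the outermost one). -/
def nestedTriangles (k : ℕ) : SimpleGraph (Fin k × Fin 3) :=
  SimpleGraph.fromRel (fun x y =>
    (x.1 = y.1 ∧ x.2 ≠ y.2) ∨ (x.1.val + 1 = y.1.val ∧ (y.2 = x.2 ∨ y.2 = x.2 + 1)))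

noncomputable section NTproof

def w : ℝ := 2 * Real.pi / 3
lemma w_pos : 0 < w := by unfold w; positivity
lemma three_w : 3 * w = 2 * Real.pi := by unfold w; ring
def AA (m : ℕ) : ℝ := m * w
def rr (n : ℕ) : ℝ := (2:ℝ)⁻¹ ^ n
lemma rr_pos (n : ℕ) : 0 < rr n := by unfold rr; positivity
lemma rr_anti : StrictAnti rr := fun i j hij =>
  pow_lt_pow_right_of_lt_one₀ (by norm_num) (by norm_num) hij
def pt (ρ θ : ℝ) : ℝ × ℝ := (ρ * Real.cos θ, ρ * Real.sin θ)
def rad (p : ℝ × ℝ) : ℝ := Real.sqrt (p.1^2 + p.2^2)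
lemma rad_pt (ρ θ : ℝ) : rad (pt ρ θ) = |ρ| := by
  unfold rad pt
  simp only
  have : (ρ * Real.cos θ)^2 + (ρ * Real.sin θ)^2 = ρ^2 := by
    have := Real.sin_sq_add_cos_sq θ; nlinarith
  rw [this, Real.sqrt_sq_eq_abs]
lemma continuous_rad : Continuous rad := by unfold rad; fun_prop
lemma pt_period (ρ θ : ℝ) : pt ρ (θ + 3*w) = pt ρ θ := by
  unfold pt; rw [three_w, Real.cos_add_two_pi, Real.sin_add_two_pi]
lemma pt_period_nat (ρ θ : ℝ) (n : ℕ) : pt ρ (θ + n*(3*w)) = pt ρ θ := by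
  induction n with
  | zero => simp
  | succ m ih =>
      have : θ + ((m:ℝ)+1)*(3*w) = (θ + m*(3*w)) + 3*w := by ring
      push_cast
      rw [this, pt_period, ih]
lemma pt_eq {ρ ρ' θ θ' : ℝ} (hρ : 0 < ρ) (hρ' : 0 < ρ')
    (h : pt ρ θ = pt ρ' θ') : ρ = ρ' ∧ ∃ n : ℤ, θ' = θ + n * (3*w) := by
  have hr : ρ = ρ' := by
    have := congrArg rad h
    rwa [rad_pt, rad_pt, abs_of_pos hρ, abs_of_pos hρ'] at this
  subst hr
  have h1 : Real.cos θ = Real.cos θ' := mul_left_cancel₀ hρ.ne' (congrArg Prod.fst h)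
  have h2 : Real.sin θ = Real.sin θ' := mul_left_cancel₀ hρ.ne' (congrArg Prod.snd h)
  refine ⟨rfl, ?_⟩
  have hexp : Complex.exp (θ * Complex.I) = Complex.exp (θ' * Complex.I) := by
    apply Complex.ext
    · rw [Complex.exp_ofReal_mul_I_re, Complex.exp_ofReal_mul_I_re, h1]
    · rw [Complex.exp_ofReal_mul_I_im, Complex.exp_ofReal_mul_I_im, h2]
  obtain ⟨n, hn⟩ := Complex.exp_eq_exp_iff_exists_int.mp hexp
  refine ⟨-n, ?_⟩
  have heq : (θ : ℂ) * Complex.I = ((θ' + (n : ℝ) * (2 * Real.pi) : ℝ)) * Complex.I := by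
    push_cast; rw [hn]; ring
  have h3 : (θ : ℂ) = ((θ' + (n : ℝ) * (2 * Real.pi) : ℝ) : ℂ) :=
    mul_right_cancel₀ Complex.I_ne_zero heq
  have h4 : θ = θ' + (n : ℝ) * (2 * Real.pi) := by exact_mod_cast h3
  rw [three_w]; push_cast; linarith

lemma AA_succ (m : ℕ) : AA (m+1) = AA m + w := by unfold AA; push_cast; ring

lemma cancel_w {a b : ℝ} (h : a * w = b * w) : a = b := mul_right_cancel₀ w_pos.ne' h

/-- Key arithmetic extraction. -/
lemma angle_solve {b b' : ℕ} {x x' : ℝ} (hx0 : 0 ≤ x) (hx1 : x ≤ 1)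
    (hx'0 : 0 ≤ x') (hx'1 : x' ≤ 1) {n : ℤ}
    (h : (b' : ℝ) + x' = b + x + n*3) :
    ∃ m : ℤ, x' - x = m ∧ (b' : ℤ) + m = b + 3*n ∧ (m = -1 ∨ m = 0 ∨ m = 1) := by
  refine ⟨(b:ℤ) - b' + 3*n, by push_cast; linarith, by ring, ?_⟩
  have h1 : (-1 : ℝ) ≤ (((b:ℤ) - b' + 3*n : ℤ) : ℝ) := by push_cast; linarith
  have h2 : (((b:ℤ) - b' + 3*n : ℤ) : ℝ) ≤ 1 := by push_cast; linarith
  have h1' : (-1 : ℤ) ≤ (b:ℤ) - b' + 3*n := by exact_mod_cast h1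
  have h2' : (b:ℤ) - b' + 3*n ≤ 1 := by exact_mod_cast h2
  omega

/-- From a `pt`-equation with angles of the form `AA b + x*w`, extract integer data. -/
lemma pt_angle_solve {ρ ρ' : ℝ} {b b' : ℕ} {x x' : ℝ} (hρ : 0 < ρ) (hρ' : 0 < ρ')
    (hx0 : 0 ≤ x) (hx1 : x ≤ 1) (hx'0 : 0 ≤ x') (hx'1 : x' ≤ 1)
    (h : pt ρ (AA b + x*w) = pt ρ' (AA b' + x'*w)) :
    ρ = ρ' ∧ ∃ m : ℤ, x' - x = m ∧ (∃ n : ℤ, (b' : ℤ) + m = b + 3*n) ∧ (m = -1 ∨ m = 0 ∨ m = 1) := by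
  obtain ⟨hr, n, hn⟩ := pt_eq hρ hρ' h
  refine ⟨hr, ?_⟩
  have : ((b' : ℝ) + x') * w = ((b : ℝ) + x + n*3) * w := by
    unfold AA at hn; nlinarith [hn]
  have h' := cancel_w this
  obtain ⟨m, hm1, hm2, hm3⟩ := angle_solve hx0 hx1 hx'0 hx'1 h'
  exact ⟨m, hm1, ⟨n, hm2⟩, hm3⟩

def crv (a b c d : ℝ) (t : ℝ) : ℝ × ℝ := pt (a + t*(b-a)) (c + t*(d-c))
def cS (a b c d : ℝ) : Set (ℝ × ℝ) := crv a b c d '' Icc 0 1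

lemma mem_cS {a b c d : ℝ} {p : ℝ × ℝ} :
    p ∈ cS a b c d ↔ ∃ t, 0 ≤ t ∧ t ≤ 1 ∧ p = crv a b c d t := by
  constructor
  · rintro ⟨t, ht, rfl⟩; exact ⟨t, ht.1, ht.2, rfl⟩
  · rintro ⟨t, h0, h1, rfl⟩; exact ⟨t, ⟨h0, h1⟩, rfl⟩

lemma cS_symm (a b c d : ℝ) : cS a b c d = cS b a d c := by
  have key : ∀ a b c d : ℝ, cS a b c d ⊆ cS b a d c := by
    intro a b c d p hp
    obtain ⟨t, h0, h1, rfl⟩ := mem_cS.mp hp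
    refine mem_cS.mpr ⟨1 - t, by linarith, by linarith, ?_⟩
    unfold crv
    congr 1 <;> ring
  exact le_antisymm (key a b c d) (key b a d c)

def tS (c d : Fin 3) : ℕ := if c.val + d.val = 1 then 0 else if c.val + d.val = 3 then 1 else 2
def dlt (c d : Fin 3) : ℝ := if d = c then 0 else w

lemma tS_comm (c d : Fin 3) : tS c d = tS d c := by unfold tS; rw [Nat.add_comm]
lemma tS_lt (c d : Fin 3) : tS c d < 3 := by unfold tS; split <;> [omega; (split <;> omega)]
lemma tS_spec : ∀ c d : Fin 3, c ≠ d →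
    (c.val = tS c d ∧ d.val = (tS c d + 1) % 3) ∨ (d.val = tS c d ∧ c.val = (tS c d + 1) % 3) := by
  decide
lemma tS_succ : ∀ c : Fin 3, tS c (c+1) = c.val := by decide
lemma tS_inj : ∀ c d c' d' : Fin 3, c ≠ d → c' ≠ d' → tS c d = tS c' d' →
    (c = c' ∧ d = d') ∨ (c = d' ∧ d = c') := by decide
lemma fin3_add_one_val : ∀ c : Fin 3, (c+1).val = (c.val + 1) % 3 := by decide

/-- Normalized relation for nested triangle edges. -/
def NTRel {k : ℕ} (u v : Fin k × Fin 3) : Prop :=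
  (u.1 = v.1 ∧ u.2 ≠ v.2) ∨ (u.1.val + 1 = v.1.val ∧ (v.2 = u.2 ∨ v.2 = u.2 + 1))

lemma edge_form {k : ℕ} {e : Sym2 (Fin k × Fin 3)} (he : e ∈ (nestedTriangles k).edgeSet) :
    ∃ u v, e = s(u, v) ∧ u ≠ v ∧ NTRel u v := by
  induction e using Sym2.ind with
  | _ x y =>
    rw [SimpleGraph.mem_edgeSet, nestedTriangles, SimpleGraph.fromRel_adj] at he
    obtain ⟨hne, h | h⟩ := he
    · exact ⟨x, y, rfl, hne, h⟩
    · exact ⟨y, x, Sym2.eq_swap, hne.symm, h⟩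

def arcP {k : ℕ} (u v : Fin k × Fin 3) : Set (ℝ × ℝ) :=
  if u.1 = v.1 then
    cS (rr u.1.val) (rr u.1.val) (AA (tS u.2 v.2)) (AA (tS u.2 v.2) + w)
  else if u.1.val < v.1.val then
    cS (rr u.1.val) (rr v.1.val) (AA u.2.val) (AA u.2.val + dlt u.2 v.2)
  else
    cS (rr v.1.val) (rr u.1.val) (AA v.2.val) (AA v.2.val + dlt v.2 u.2)

lemma arcP_symm {k : ℕ} (u v : Fin k × Fin 3) : arcP u v = arcP v u := by
  unfold arcP
  by_cases h : u.1 = v.1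
  · rw [if_pos h, if_pos h.symm, h, tS_comm]
  · have h' : v.1 ≠ u.1 := Ne.symm h
    rw [if_neg h, if_neg h']
    have hval : u.1.val ≠ v.1.val := fun hv => h (Fin.ext hv)
    rcases lt_or_gt_of_ne hval with hlt | hgt
    · rw [if_pos hlt, if_neg (by omega)]
    · rw [if_neg (by omega), if_pos hgt]

def ntArc {k : ℕ} : Sym2 (Fin k × Fin 3) → Set (ℝ × ℝ) :=
  Sym2.lift ⟨arcP, arcP_symm⟩

lemma ntArc_mk {k : ℕ} (u v : Fin k × Fin 3) : ntArc s(u, v) = arcP u v := rfl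

def ntPos {k : ℕ} (v : Fin k × Fin 3) : ℝ × ℝ := pt (rr v.1.val) (AA v.2.val)

lemma pt_AA_mod (ρ : ℝ) (a : ℕ) : pt ρ (AA a) = pt ρ (AA (a % 3)) := by
  obtain ⟨q, hq⟩ : ∃ q, a = a % 3 + 3 * q := ⟨a / 3, by omega⟩
  conv_lhs => rw [hq]
  have : AA (a % 3 + 3 * q) = AA (a % 3) + q * (3*w) := by unfold AA; push_cast; ring
  rw [this, pt_period_nat]

lemma AA_fin_inj {c d : Fin 3} (n : ℤ) (h : (d.val : ℤ) = c.val + n*3) : c = d := by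
  have hc := c.isLt; have hd := d.isLt
  have : (c.val : ℤ) = d.val := by omega
  exact Fin.ext (by omega)

lemma ntPos_inj {k : ℕ} : Function.Injective (ntPos (k := k)) := by
  intro u v h
  unfold ntPos at h
  obtain ⟨hr, n, hn⟩ := pt_eq (rr_pos _) (rr_pos _) h
  have h1 : u.1 = v.1 := Fin.ext (rr_anti.injective hr)
  have : ((v.2.val : ℝ)) * w = ((u.2.val : ℝ) + n*3) * w := by
    unfold AA at hn; nlinarith [hn]
  have h' := cancel_w this
  have h2 : (v.2.val : ℤ) = u.2.val + n*3 := by exact_mod_cast h'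
  have h3 : u.2 = v.2 := AA_fin_inj n h2
  exact Prod.ext h1 h3

lemma interp_pos {a b t : ℝ} (ha : 0 < a) (hb : 0 < b) (h0 : 0 ≤ t) (h1 : t ≤ 1) :
    0 < a + t*(b-a) := by nlinarith [mul_nonneg h0 hb.le, mul_nonneg (sub_nonneg.mpr h1) ha.le]

lemma interp_le {a b t : ℝ} (hba : b ≤ a) (h0 : 0 ≤ t) (h1 : t ≤ 1) :
    b ≤ a + t*(b-a) ∧ a + t*(b-a) ≤ a := ⟨by nlinarith, by nlinarith⟩

lemma interp_inj {a b t t' : ℝ} (hba : b ≠ a) (h : a + t*(b-a) = a + t'*(b-a)) : t = t' := by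
  have hb : b - a ≠ 0 := sub_ne_zero.mpr hba
  have h2 : (t - t') * (b - a) = 0 := by linarith
  rcases mul_eq_zero.mp h2 with h3 | h3
  · linarith
  · exact absurd h3 hb

lemma interp_eq0 {a b t : ℝ} (hba : b ≠ a) (h : a + t*(b-a) = a) : t = 0 :=
  interp_inj hba (by linarith)

lemma interp_eq1 {a b t : ℝ} (hba : b ≠ a) (h : a + t*(b-a) = b) : t = 1 :=
  interp_inj hba (by linarith)

lemma rr_succ_ne (j : ℕ) : rr (j+1) ≠ rr j := ne_of_lt (rr_anti (Nat.lt_succ_self j))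

lemma ntArc_T {k : ℕ} {u v : Fin k × Fin 3} (h1 : u.1 = v.1) :
    ntArc s(u,v) = cS (rr u.1.val) (rr u.1.val) (AA (tS u.2 v.2)) (AA (tS u.2 v.2) + w) := by
  rw [ntArc_mk]; unfold arcP; rw [if_pos h1]

lemma ntArc_C {k : ℕ} {u v : Fin k × Fin 3} (h : u.1.val + 1 = v.1.val) :
    ntArc s(u,v) = cS (rr u.1.val) (rr v.1.val) (AA u.2.val) (AA u.2.val + dlt u.2 v.2) := by
  rw [ntArc_mk]; unfold arcP
  rw [if_neg (fun hh => by have := congrArg Fin.val hh; omega), if_pos (by omega)]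

lemma crv_T (ρ θ t : ℝ) : crv ρ ρ θ (θ + w) t = pt ρ (θ + t * w) := by
  unfold crv; rw [show ρ + t*(ρ-ρ) = ρ by ring, show θ + t*((θ+w)-θ) = θ + t*w by ring]

lemma mem_T {i s : ℕ} {p : ℝ × ℝ} :
    p ∈ cS (rr i) (rr i) (AA s) (AA s + w) ↔
      ∃ t, 0 ≤ t ∧ t ≤ 1 ∧ p = pt (rr i) (AA s + t*w) := by
  rw [mem_cS]; simp_rw [crv_T]

lemma dlt_eq (c d : Fin 3) : dlt c d = (if d = c then (0:ℝ) else 1) * w := by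
  unfold dlt; by_cases h : d = c <;> simp [h]

lemma crv_C (a b θ δ t : ℝ) : crv a b θ (θ + δ) t = pt (a + t*(b-a)) (θ + t*δ) := by
  unfold crv; rw [show θ + t*((θ+δ)-θ) = θ + t*δ by ring]

lemma mem_C {a b θ δ : ℝ} {p : ℝ × ℝ} :
    p ∈ cS a b θ (θ + δ) ↔ ∃ t, 0 ≤ t ∧ t ≤ 1 ∧ p = pt (a + t*(b-a)) (θ + t*δ) := by
  rw [mem_cS]; simp_rw [crv_C]

lemma fin3_succ_ne : ∀ c : Fin 3, c + 1 ≠ c := by decide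

lemma T_endpoint {k : ℕ} {u v : Fin k × Fin 3} (h1 : u.1 = v.1) (h2 : u.2 ≠ v.2) {t : ℝ}
    (ht : t = 0 ∨ t = 1) :
    ∃ z, (z = u ∨ z = v) ∧ pt (rr u.1.val) (AA (tS u.2 v.2) + t*w) = ntPos z := by
  set s := tS u.2 v.2 with hs
  rcases ht with rfl | rfl
  · refine ⟨(u.1, ⟨s % 3, Nat.mod_lt _ (by norm_num)⟩), ?_, ?_⟩
    · rcases tS_spec u.2 v.2 h2 with ⟨hc, _⟩ | ⟨hc, _⟩
      · left; exact Prod.ext rfl (Fin.ext (by rw [hc]; exact Nat.mod_eq_of_lt (tS_lt _ _)))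
      · right; exact Prod.ext h1 (Fin.ext (by rw [hc]; exact Nat.mod_eq_of_lt (tS_lt _ _)))
    · rw [show AA s + 0*w = AA s by ring, pt_AA_mod]; rfl
  · refine ⟨(u.1, ⟨(s+1) % 3, Nat.mod_lt _ (by norm_num)⟩), ?_, ?_⟩
    · rcases tS_spec u.2 v.2 h2 with ⟨_, hd⟩ | ⟨_, hd⟩
      · right; exact Prod.ext h1 (Fin.ext hd.symm)
      · left; exact Prod.ext rfl (Fin.ext hd.symm)
    · rw [show AA s + 1*w = AA (s+1) by unfold AA; push_cast; ring, pt_AA_mod]; rfl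

lemma C_end1 {k : ℕ} {u v : Fin k × Fin 3} (h : u.1.val + 1 = v.1.val)
    (hd : v.2 = u.2 ∨ v.2 = u.2 + 1) :
    pt (rr v.1.val) (AA u.2.val + dlt u.2 v.2) = ntPos v := by
  rcases hd with hd | hd
  · unfold dlt; rw [if_pos hd, add_zero]
    unfold ntPos; rw [hd]
  · have hne : v.2 ≠ u.2 := by rw [hd]; exact fin3_succ_ne u.2
    unfold dlt; rw [if_neg hne]
    rw [show AA u.2.val + w = AA (u.2.val + 1) from (AA_succ _).symm, pt_AA_mod]
    unfold ntPos; rw [hd, fin3_add_one_val]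

lemma t01 {t : ℝ} {m : ℤ} (h : t = (m:ℝ)) (h0 : 0 ≤ t) (h1 : t ≤ 1) : t = 0 ∨ t = 1 := by
  have hm0 : (0:ℤ) ≤ m := by exact_mod_cast h ▸ h0
  have hm1 : m ≤ 1 := by exact_mod_cast h ▸ h1
  interval_cases m
  · left; rw [h]; norm_num
  · right; rw [h]; norm_num

/-- membership data for a C-arc (normalized conn edge). -/
lemma C_mem {k : ℕ} {u v : Fin k × Fin 3} (h1 : u.1.val + 1 = v.1.val) {p : ℝ × ℝ} :
    p ∈ ntArc s(u,v) ↔ ∃ t, 0 ≤ t ∧ t ≤ 1 ∧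
      p = pt (rr u.1.val + t*(rr v.1.val - rr u.1.val))
             (AA u.2.val + (t * (if v.2 = u.2 then (0:ℝ) else 1))*w) := by
  rw [ntArc_C h1, dlt_eq, mem_C]
  constructor
  · rintro ⟨t, h0, hl, rfl⟩
    exact ⟨t, h0, hl, by rw [show t * ((if v.2 = u.2 then (0:ℝ) else 1) * w)
      = t * (if v.2 = u.2 then (0:ℝ) else 1) * w by ring]⟩
  · rintro ⟨t, h0, hl, rfl⟩
    exact ⟨t, h0, hl, by rw [show t * ((if v.2 = u.2 then (0:ℝ) else 1) * w)
      = t * (if v.2 = u.2 then (0:ℝ) else 1) * w by ring]⟩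

lemma T_mem {k : ℕ} {u v : Fin k × Fin 3} (h1 : u.1 = v.1) {p : ℝ × ℝ} :
    p ∈ ntArc s(u,v) ↔ ∃ t, 0 ≤ t ∧ t ≤ 1 ∧
      p = pt (rr u.1.val) (AA (tS u.2 v.2) + t*w) := by
  rw [ntArc_T h1, mem_T]
def en (c d : Fin 3) : ℕ := if d = c then 0 else 1

lemma dlt_en (c d : Fin 3) : dlt c d = (en c d : ℝ) * w := by
  unfold dlt en; by_cases h : d = c <;> simp [h]

lemma en01 (c d : Fin 3) : en c d = 0 ∨ en c d = 1 := by
  unfold en; by_cases h : d = c <;> simp [h]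

lemma crv_at0 (a b c d : ℝ) : crv a b c d 0 = pt a c := by
  unfold crv; rw [show a + 0*(b-a) = a by ring, show c + 0*(d - c) = c by ring]

lemma crv_at1 (a b c d : ℝ) : crv a b c d 1 = pt b d := by
  unfold crv; rw [show a + 1*(b-a) = b by ring, show c + 1*(d - c) = d by ring]

lemma crv_cont (a b c d : ℝ) : Continuous (crv a b c d) := by
  unfold crv pt; fun_prop

/-- membership data for a C-arc (normalized conn edge). -/
lemma C_mem' {k : ℕ} {u v : Fin k × Fin 3} (h1 : u.1.val + 1 = v.1.val) {p : ℝ × ℝ} :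
    p ∈ ntArc s(u,v) ↔ ∃ t, 0 ≤ t ∧ t ≤ 1 ∧
      p = pt (rr u.1.val + t*(rr v.1.val - rr u.1.val))
             (AA u.2.val + (t * (en u.2 v.2 : ℝ))*w) := by
  rw [ntArc_C h1, dlt_en, mem_C]
  constructor
  · rintro ⟨t, h0, hl, rfl⟩
    exact ⟨t, h0, hl, by rw [mul_assoc]⟩
  · rintro ⟨t, h0, hl, rfl⟩
    exact ⟨t, h0, hl, by rw [mul_assoc]⟩

lemma en_mul_mem {t : ℝ} (c d : Fin 3) (h0 : 0 ≤ t) (h1 : t ≤ 1) :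
    0 ≤ t * (en c d : ℝ) ∧ t * (en c d : ℝ) ≤ 1 := by
  rcases en01 c d with h | h <;> rw [h] <;> norm_num <;> constructor <;> linarith

lemma C_pt0 {k : ℕ} (u v : Fin k × Fin 3) :
    pt (rr u.1.val + 0*(rr v.1.val - rr u.1.val)) (AA u.2.val + (0 * (en u.2 v.2 : ℝ))*w)
      = ntPos u := by
  rw [show rr u.1.val + 0*(rr v.1.val - rr u.1.val) = rr u.1.val by ring,
      show AA u.2.val + (0 * (en u.2 v.2 : ℝ))*w = AA u.2.val by ring]
  rfl

lemma C_pt1 {k : ℕ} {u v : Fin k × Fin 3} (h1 : u.1.val + 1 = v.1.val)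
    (h2 : v.2 = u.2 ∨ v.2 = u.2 + 1) :
    pt (rr u.1.val + 1*(rr v.1.val - rr u.1.val)) (AA u.2.val + (1 * (en u.2 v.2 : ℝ))*w)
      = ntPos v := by
  rw [show rr u.1.val + 1*(rr v.1.val - rr u.1.val) = rr v.1.val by ring,
      show (1 * (en u.2 v.2 : ℝ))*w = dlt u.2 v.2 by rw [dlt_en]; ring]
  exact C_end1 h1 h2

lemma rr_le_iff {a b : ℕ} : rr a ≤ rr b ↔ b ≤ a := rr_anti.le_iff_ge

lemma inter_TT {k : ℕ} {u v u' v' : Fin k × Fin 3}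
    (h1 : u.1 = v.1) (h2 : u.2 ≠ v.2) (h1' : u'.1 = v'.1) (h2' : u'.2 ≠ v'.2)
    (hef : s(u,v) ≠ s(u',v')) {p : ℝ × ℝ}
    (hp : p ∈ ntArc s(u,v)) (hp' : p ∈ ntArc s(u',v')) :
    ∃ z, (z = u ∨ z = v) ∧ (z = u' ∨ z = v') ∧ ntPos z = p := by
  obtain ⟨t, ht0, ht1, rfl⟩ := (T_mem h1).mp hp
  obtain ⟨t', ht0', ht1', heq⟩ := (T_mem h1').mp hp'
  obtain ⟨hr, m, hm1, ⟨n, hn⟩, hm3⟩ :=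
    pt_angle_solve (rr_pos _) (rr_pos _) ht0 ht1 ht0' ht1' heq
  have hi : u.1 = u'.1 := Fin.ext (rr_anti.injective hr)
  have hts : (t = 0 ∨ t = 1) ∧ (t' = 0 ∨ t' = 1) ∨ m = 0 := by
    rcases hm3 with rfl | rfl | rfl
    · left; push_cast at hm1
      constructor
      · right; linarith
      · left; linarith
    · right; rfl
    · left; push_cast at hm1
      constructor
      · left; linarith
      · right; linarith
  rcases hts with ⟨ht, ht'⟩ | rfl
  · obtain ⟨z, hz, hze⟩ := T_endpoint h1 h2 ht
    obtain ⟨z', hz', hze'⟩ := T_endpoint h1' h2' ht'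
    have hzz : z = z' := ntPos_inj (hze.symm.trans (heq.trans hze'))
    exact ⟨z, hz, hzz ▸ hz', hze.symm⟩
  · exfalso
    have hss : tS u'.2 v'.2 = tS u.2 v.2 := by
      have hl1 := tS_lt u.2 v.2; have hl2 := tS_lt u'.2 v'.2; omega
    rcases tS_inj u'.2 v'.2 u.2 v.2 h2' h2 hss with ⟨hc1, hc2⟩ | ⟨hc1, hc2⟩
    · have hu : u = u' := Prod.ext hi hc1.symm
      have hv : v = v' := Prod.ext (h1.symm.trans (hi.trans h1')) hc2.symm
      exact hef (by rw [hu, hv])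
    · have hu : u = v' := Prod.ext (hi.trans h1') hc2.symm
      have hv : v = u' := Prod.ext (h1.symm.trans hi) hc1.symm
      exact hef (by rw [hu, hv, Sym2.eq_swap])

lemma inter_TC {k : ℕ} {u v u' v' : Fin k × Fin 3}
    (h1 : u.1 = v.1) (h2 : u.2 ≠ v.2)
    (h1' : u'.1.val + 1 = v'.1.val) (h2' : v'.2 = u'.2 ∨ v'.2 = u'.2 + 1)
    {p : ℝ × ℝ} (hp : p ∈ ntArc s(u,v)) (hp' : p ∈ ntArc s(u',v')) :
    ∃ z, (z = u ∨ z = v) ∧ (z = u' ∨ z = v') ∧ ntPos z = p := by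
  obtain ⟨t, ht0, ht1, rfl⟩ := (T_mem h1).mp hp
  obtain ⟨t', ht0', ht1', heq⟩ := (C_mem' h1').mp hp'
  obtain ⟨hx0, hx1⟩ := en_mul_mem u'.2 v'.2 ht0' ht1'
  obtain ⟨hr, m, hm1, ⟨n, hn⟩, hm3⟩ :=
    pt_angle_solve (rr_pos _) (interp_pos (rr_pos _) (rr_pos _) ht0' ht1') ht0 ht1 hx0 hx1 heq
  have hjv : rr v'.1.val = rr (u'.1.val + 1) := by rw [h1']
  have hlt : rr (u'.1.val + 1) < rr u'.1.val := rr_anti (Nat.lt_succ_self _)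
  have hbnd := interp_le (b := rr v'.1.val) (a := rr u'.1.val) (by rw [hjv]; exact hlt.le) ht0' ht1'
  have hij : u.1.val = u'.1.val ∨ u.1.val = u'.1.val + 1 := by
    have hge : rr (u'.1.val + 1) ≤ rr u.1.val := by rw [← hjv]; rw [← hr] at hbnd; exact hbnd.1
    have hle : rr u.1.val ≤ rr u'.1.val := by rw [← hr] at hbnd; exact hbnd.2
    have := rr_le_iff.mp hge; have := rr_le_iff.mp hle; omega
  rcases hij with hij | hij
  · -- outer circle : t' = 0
    have ht'0 : t' = 0 := by
      apply interp_eq0 (a := rr u'.1.val) (b := rr v'.1.val)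
        (by rw [hjv]; exact hlt.ne)
      rw [← hr, hij]
    rw [ht'0, C_pt0 u' v'] at heq
    -- T side endpoint
    have htm : t = 0 ∨ t = 1 := by
      apply t01 (m := -m) _ ht0 ht1
      rw [ht'0] at hm1; push_cast; push_cast at hm1; linarith
    obtain ⟨z, hz, hze⟩ := T_endpoint h1 h2 htm
    have hzz : z = u' := ntPos_inj (hze.symm.trans heq)
    exact ⟨z, hz, Or.inl hzz, hze.symm⟩
  · -- inner circle : t' = 1
    have ht'1 : t' = 1 := by
      apply interp_eq1 (a := rr u'.1.val) (b := rr v'.1.val)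
        (by rw [hjv]; exact hlt.ne)
      rw [← hr, hij, hjv]
    rw [ht'1, C_pt1 h1' h2'] at heq
    have htm : t = 0 ∨ t = 1 := by
      rcases en01 u'.2 v'.2 with he | he
      · apply t01 (m := -m) _ ht0 ht1
        rw [ht'1, he] at hm1; push_cast; push_cast at hm1; linarith
      · apply t01 (m := 1 - m) _ ht0 ht1
        rw [ht'1, he] at hm1; push_cast; push_cast at hm1; linarith
    obtain ⟨z, hz, hze⟩ := T_endpoint h1 h2 htm
    have hzz : z = v' := ntPos_inj (hze.symm.trans heq)
    exact ⟨z, hz, Or.inr hzz, hze.symm⟩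

lemma inter_CC {k : ℕ} {u v u' v' : Fin k × Fin 3}
    (h1 : u.1.val + 1 = v.1.val) (h2 : v.2 = u.2 ∨ v.2 = u.2 + 1)
    (h1' : u'.1.val + 1 = v'.1.val) (h2' : v'.2 = u'.2 ∨ v'.2 = u'.2 + 1)
    (hj : u.1.val ≤ u'.1.val) (hef : s(u,v) ≠ s(u',v')) {p : ℝ × ℝ}
    (hp : p ∈ ntArc s(u,v)) (hp' : p ∈ ntArc s(u',v')) :
    ∃ z, (z = u ∨ z = v) ∧ (z = u' ∨ z = v') ∧ ntPos z = p := by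
  obtain ⟨t, ht0, ht1, rfl⟩ := (C_mem' h1).mp hp
  obtain ⟨t', ht0', ht1', heq⟩ := (C_mem' h1').mp hp'
  obtain ⟨hx0, hx1⟩ := en_mul_mem u.2 v.2 ht0 ht1
  obtain ⟨hx0', hx1'⟩ := en_mul_mem u'.2 v'.2 ht0' ht1'
  obtain ⟨hr, m, hm1, ⟨n, hn⟩, hm3⟩ :=
    pt_angle_solve (interp_pos (rr_pos _) (rr_pos _) ht0 ht1)
      (interp_pos (rr_pos _) (rr_pos _) ht0' ht1') hx0 hx1 hx0' hx1' heq
  have hjv : rr v.1.val = rr (u.1.val + 1) := by rw [h1]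
  have hjv' : rr v'.1.val = rr (u'.1.val + 1) := by rw [h1']
  have hlt : rr (u.1.val + 1) < rr u.1.val := rr_anti (Nat.lt_succ_self _)
  have hlt' : rr (u'.1.val + 1) < rr u'.1.val := rr_anti (Nat.lt_succ_self _)
  have hbnd := interp_le (b := rr v.1.val) (a := rr u.1.val) (by rw [hjv]; exact hlt.le) ht0 ht1
  have hbnd' := interp_le (b := rr v'.1.val) (a := rr u'.1.val) (by rw [hjv']; exact hlt'.le) ht0' ht1'
  rcases Nat.lt_or_ge u.1.val u'.1.val with hlt2 | hge2
  · -- different annuli : must touch at the shared circle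
    have hchain : rr (u.1.val + 1) ≤ rr u'.1.val := by
      calc rr (u.1.val + 1) ≤ rr u.1.val + t*(rr v.1.val - rr u.1.val) := by
            rw [← hjv]; exact hbnd.1
        _ = rr u'.1.val + t'*(rr v'.1.val - rr u'.1.val) := hr
        _ ≤ rr u'.1.val := hbnd'.2
    have hj1 : u'.1.val = u.1.val + 1 := by
      have := rr_le_iff.mp hchain; omega
    have hrv : rr u.1.val + t*(rr v.1.val - rr u.1.val) = rr v.1.val := by
      have hub : rr u.1.val + t*(rr v.1.val - rr u.1.val) ≤ rr v.1.val := by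
        rw [hr, hjv, ← hj1]; exact hbnd'.2
      have hlb := hbnd.1
      linarith
    have ht1' : t = 1 := interp_eq1 (by rw [hjv]; exact hlt.ne) hrv
    have hrv' : rr u'.1.val + t'*(rr v'.1.val - rr u'.1.val) = rr u'.1.val := by
      rw [← hr, hrv, hjv, ← hj1]
    have ht0'' : t' = 0 := interp_eq0 (by rw [hjv']; exact hlt'.ne) hrv'
    rw [ht0'', C_pt0 u' v'] at heq
    have hpv : pt (rr u.1.val + t*(rr v.1.val - rr u.1.val))
        (AA u.2.val + (t * (en u.2 v.2 : ℝ))*w) = ntPos v := by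
      rw [ht1']; exact C_pt1 h1 h2
    have hvu' : v = u' := ntPos_inj (hpv.symm.trans heq)
    exact ⟨v, Or.inr rfl, Or.inl hvu', hpv.symm⟩
  · -- same annulus
    have hjj : u.1.val = u'.1.val := le_antisymm hj hge2
    have huu : u.1 = u'.1 := Fin.ext hjj
    have hvv1 : v.1 = v'.1 := Fin.ext (by omega)
    have htt : t = t' := by
      apply interp_inj (a := rr u.1.val) (b := rr v.1.val) (by rw [hjv]; exact hlt.ne)
      rw [hr, huu, hvv1]
    subst htt
    by_cases hv : v.2 = u.2 <;> by_cases hv' : v'.2 = u'.2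
    · -- both radial : same edge, contradiction
      exfalso
      have he0 : en u.2 v.2 = 0 := by unfold en; rw [if_pos hv]
      have he0' : en u'.2 v'.2 = 0 := by unfold en; rw [if_pos hv']
      have hm0 : m = 0 := by
        rw [he0, he0'] at hm1; push_cast at hm1
        have : (m:ℝ) = 0 := by linarith
        exact_mod_cast this
      have hc : u.2 = u'.2 := by
        apply Fin.ext
        have hb1 := u.2.isLt; have hb2 := u'.2.isLt; omega
      have hu : u = u' := Prod.ext huu hc
      have hvv : v = v' := Prod.ext hvv1 (by rw [hv, hv', hc])
      exact hef (by rw [hu, hvv])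
    · -- radial vs diagonal
      have he0 : en u.2 v.2 = 0 := by unfold en; rw [if_pos hv]
      have he1 : en u'.2 v'.2 = 1 := by unfold en; rw [if_neg hv']
      have htm : t = 0 ∨ t = 1 := by
        apply t01 (m := m) _ ht0 ht1
        rw [he0, he1] at hm1; push_cast at hm1; push_cast; linarith
      rcases htm with rfl | rfl
      · rw [C_pt0 u' v'] at heq
        have hpu : pt (rr u.1.val + 0*(rr v.1.val - rr u.1.val))
            (AA u.2.val + (0 * (en u.2 v.2 : ℝ))*w) = ntPos u := C_pt0 u v
        have huu' : u = u' := ntPos_inj (hpu.symm.trans heq)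
        exact ⟨u, Or.inl rfl, Or.inl huu', hpu.symm⟩
      · rw [C_pt1 h1' h2'] at heq
        have hpv : pt (rr u.1.val + 1*(rr v.1.val - rr u.1.val))
            (AA u.2.val + (1 * (en u.2 v.2 : ℝ))*w) = ntPos v := C_pt1 h1 h2
        have hvv' : v = v' := ntPos_inj (hpv.symm.trans heq)
        exact ⟨v, Or.inr rfl, Or.inr hvv', hpv.symm⟩
    · -- diagonal vs radial
      have he1 : en u.2 v.2 = 1 := by unfold en; rw [if_neg hv]
      have he0' : en u'.2 v'.2 = 0 := by unfold en; rw [if_pos hv']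
      have htm : t = 0 ∨ t = 1 := by
        apply t01 (m := -m) _ ht0 ht1
        rw [he1, he0'] at hm1; push_cast at hm1; push_cast; linarith
      rcases htm with rfl | rfl
      · rw [C_pt0 u' v'] at heq
        have hpu : pt (rr u.1.val + 0*(rr v.1.val - rr u.1.val))
            (AA u.2.val + (0 * (en u.2 v.2 : ℝ))*w) = ntPos u := C_pt0 u v
        have huu' : u = u' := ntPos_inj (hpu.symm.trans heq)
        exact ⟨u, Or.inl rfl, Or.inl huu', hpu.symm⟩
      · rw [C_pt1 h1' h2'] at heq
        have hpv : pt (rr u.1.val + 1*(rr v.1.val - rr u.1.val))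
            (AA u.2.val + (1 * (en u.2 v.2 : ℝ))*w) = ntPos v := C_pt1 h1 h2
        have hvv' : v = v' := ntPos_inj (hpv.symm.trans heq)
        exact ⟨v, Or.inr rfl, Or.inr hvv', hpv.symm⟩
    · -- both diagonal : same edge, contradiction
      exfalso
      have he1 : en u.2 v.2 = 1 := by unfold en; rw [if_neg hv]
      have he1' : en u'.2 v'.2 = 1 := by unfold en; rw [if_neg hv']
      have hm0 : m = 0 := by
        rw [he1, he1'] at hm1; push_cast at hm1
        have : (m:ℝ) = 0 := by linarith
        exact_mod_cast this
      have hc : u.2 = u'.2 := by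
        apply Fin.ext
        have hb1 := u.2.isLt; have hb2 := u'.2.isLt; omega
      have hu : u = u' := Prod.ext huu hc
      have hd2 : v.2 = u.2 + 1 := h2.resolve_left hv
      have hd2' : v'.2 = u'.2 + 1 := h2'.resolve_left hv'
      have hvv : v = v' := Prod.ext hvv1 (by rw [hd2, hd2', hc])
      exact hef (by rw [hu, hvv])
def ntDrawing (k : ℕ) : PlanarDrawing (nestedTriangles k) where
  pos := ntPos
  pos_inj := ntPos_inj
  arc := ntArc
  arc_isArc := by
    intro e he
    obtain ⟨u, v, rfl, hne, hrel⟩ := edge_form he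
    rcases hrel with ⟨h1, h2⟩ | ⟨h1, h2⟩
    · -- T edge
      have hinj : InjOn (crv (rr u.1.val) (rr u.1.val) (AA (tS u.2 v.2))
          (AA (tS u.2 v.2) + w)) (Icc 0 1) := by
        intro t1 ht1 t2 ht2 hteq
        rw [crv_T, crv_T] at hteq
        obtain ⟨_, m, hm1, ⟨n, hn⟩, hm3⟩ :=
          pt_angle_solve (rr_pos _) (rr_pos _) ht1.1 ht1.2 ht2.1 ht2.2 hteq
        have hm0 : m = 0 := by omega
        rw [hm0] at hm1; push_cast at hm1; linarith
      have himg : crv (rr u.1.val) (rr u.1.val) (AA (tS u.2 v.2)) (AA (tS u.2 v.2) + w) ''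
          Icc 0 1 = ntArc s(u,v) := by rw [ntArc_T h1]; rfl
      rcases tS_spec u.2 v.2 h2 with ⟨hc, hd⟩ | ⟨hc, hd⟩
      · refine ⟨u, v, rfl, crv (rr u.1.val) (rr u.1.val) (AA (tS u.2 v.2)) (AA (tS u.2 v.2) + w),
          (crv_cont _ _ _ _).continuousOn, hinj, ?_, ?_, himg⟩
        · rw [crv_at0]; unfold ntPos; rw [← hc]
        · rw [crv_at1, show AA (tS u.2 v.2) + w = AA (tS u.2 v.2 + 1) from (AA_succ _).symm,
            pt_AA_mod]
          unfold ntPos; rw [← hd, h1]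
      · refine ⟨v, u, Sym2.eq_swap, crv (rr u.1.val) (rr u.1.val) (AA (tS u.2 v.2))
          (AA (tS u.2 v.2) + w), (crv_cont _ _ _ _).continuousOn, hinj, ?_, ?_, himg⟩
        · rw [crv_at0]; unfold ntPos; rw [← hc, h1]
        · rw [crv_at1, show AA (tS u.2 v.2) + w = AA (tS u.2 v.2 + 1) from (AA_succ _).symm,
            pt_AA_mod]
          unfold ntPos; rw [← hd]
    · -- C edge
      refine ⟨u, v, rfl, crv (rr u.1.val) (rr v.1.val) (AA u.2.val) (AA u.2.val + dlt u.2 v.2),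
        (crv_cont _ _ _ _).continuousOn, ?_, ?_, ?_, by rw [ntArc_C h1]; rfl⟩
      · intro t1 ht1 t2 ht2 hteq
        have hrad := congrArg rad hteq
        unfold crv at hrad; rw [rad_pt, rad_pt] at hrad
        have hne' : rr v.1.val ≠ rr u.1.val := by
          rw [show v.1.val = u.1.val + 1 from h1.symm]; exact rr_succ_ne _
        have hp1 : 0 < rr u.1.val + t1*(rr v.1.val - rr u.1.val) :=
          interp_pos (rr_pos _) (rr_pos _) ht1.1 ht1.2
        have hp2 : 0 < rr u.1.val + t2*(rr v.1.val - rr u.1.val) :=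
          interp_pos (rr_pos _) (rr_pos _) ht2.1 ht2.2
        rw [abs_of_pos hp1, abs_of_pos hp2] at hrad
        exact interp_inj hne' hrad
      · rw [crv_at0]; rfl
      · rw [crv_at1]; exact C_end1 h1 h2
  arc_inter_arc := by
    intro e he f hf hef p hp
    obtain ⟨u, v, rfl, hne, hrel⟩ := edge_form he
    obtain ⟨u', v', rfl, hne', hrel'⟩ := edge_form hf
    obtain ⟨hpe, hpf⟩ := hp
    suffices h : ∃ z, (z = u ∨ z = v) ∧ (z = u' ∨ z = v') ∧ ntPos z = p by
      obtain ⟨z, hz1, hz2, hz3⟩ := h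
      exact ⟨z, ⟨Sym2.mem_iff.mpr (by tauto), Sym2.mem_iff.mpr (by tauto)⟩, hz3⟩
    rcases hrel with ⟨h1, h2⟩ | ⟨h1, h2⟩ <;> rcases hrel' with ⟨h1', h2'⟩ | ⟨h1', h2'⟩
    · exact inter_TT h1 h2 h1' h2' hef hpe hpf
    · exact inter_TC h1 h2 h1' h2' hpe hpf
    · obtain ⟨z, hz2, hz1, hz3⟩ := inter_TC h1' h2' h1 h2 hpf hpe
      exact ⟨z, hz1, hz2, hz3⟩
    · rcases le_or_gt u.1.val u'.1.val with hle | hlt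
      · exact inter_CC h1 h2 h1' h2' hle hef hpe hpf
      · obtain ⟨z, hz2, hz1, hz3⟩ := inter_CC h1' h2' h1 h2 hlt.le (Ne.symm hef) hpf hpe
        exact ⟨z, hz1, hz2, hz3⟩
  arc_pos := by
    intro e he v₀ hv₀
    obtain ⟨u, v, rfl, hne, hrel⟩ := edge_form he
    have hform : ntPos v₀ = pt (rr v₀.1.val) (AA v₀.2.val + 0*w) := by
      rw [show AA v₀.2.val + 0*w = AA v₀.2.val by ring]; rfl
    rcases hrel with ⟨h1, h2⟩ | ⟨h1, h2⟩
    · obtain ⟨t, ht0, ht1, heq⟩ := (T_mem h1).mp hv₀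
      rw [hform] at heq
      obtain ⟨hr, m, hm1, ⟨n, hn⟩, hm3⟩ :=
        pt_angle_solve (rr_pos _) (rr_pos _) (le_refl (0:ℝ)) zero_le_one ht0 ht1 heq
      have htm : t = 0 ∨ t = 1 := t01 (m := m) (by push_cast at hm1 ⊢; linarith) ht0 ht1
      obtain ⟨z, hz, hze⟩ := T_endpoint h1 h2 htm
      have hvz : v₀ = z := ntPos_inj (hform.trans (heq.trans hze))
      exact Sym2.mem_iff.mpr (by rw [hvz]; tauto)
    · obtain ⟨t, ht0, ht1, heq⟩ := (C_mem' h1).mp hv₀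
      rw [hform] at heq
      obtain ⟨hx0, hx1⟩ := en_mul_mem u.2 v.2 ht0 ht1
      obtain ⟨hr, m, hm1, ⟨n, hn⟩, hm3⟩ :=
        pt_angle_solve (rr_pos _) (interp_pos (rr_pos _) (rr_pos _) ht0 ht1)
          (le_refl (0:ℝ)) zero_le_one hx0 hx1 heq
      have hjv : rr v.1.val = rr (u.1.val + 1) := by rw [h1]
      have hlt : rr (u.1.val + 1) < rr u.1.val := rr_anti (Nat.lt_succ_self _)
      have hbnd := interp_le (b := rr v.1.val) (a := rr u.1.val)
        (by rw [hjv]; exact hlt.le) ht0 ht1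
      have hij : v₀.1.val = u.1.val ∨ v₀.1.val = u.1.val + 1 := by
        have hge : rr (u.1.val + 1) ≤ rr v₀.1.val := by rw [← hjv, hr]; exact hbnd.1
        have hle : rr v₀.1.val ≤ rr u.1.val := by rw [hr]; exact hbnd.2
        have := rr_le_iff.mp hge; have := rr_le_iff.mp hle; omega
      rcases hij with hij | hij
      · have ht'0 : t = 0 := by
          apply interp_eq0 (a := rr u.1.val) (b := rr v.1.val) (by rw [hjv]; exact hlt.ne)
          rw [← hr, hij]
        rw [ht'0, C_pt0 u v] at heq
        have hvz : v₀ = u := ntPos_inj (hform.trans heq)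
        exact Sym2.mem_iff.mpr (Or.inl hvz)
      · have ht'1 : t = 1 := by
          apply interp_eq1 (a := rr u.1.val) (b := rr v.1.val) (by rw [hjv]; exact hlt.ne)
          rw [← hr, hij, hjv]
        rw [ht'1, C_pt1 h1 h2] at heq
        have hvz : v₀ = v := ntPos_inj (hform.trans heq)
        exact Sym2.mem_iff.mpr (Or.inr hvz)
end NTproof


noncomputable section NTproof2
open PlanarDrawing

lemma rad_nonneg (p : ℝ × ℝ) : 0 ≤ rad p := Real.sqrt_nonneg _

def extS (ρ : ℝ) : Set (ℝ × ℝ) := {p | ρ < rad p}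

lemma isOpen_extS (ρ : ℝ) : IsOpen (extS ρ) := isOpen_lt continuous_const continuous_rad

/-- every nonzero point has a polar representation -/
lemma polar_rep {p : ℝ × ℝ} (hp : 0 < rad p) :
    ∃ θ, -Real.pi < θ ∧ θ ≤ Real.pi ∧ p = pt (rad p) θ := by
  set z : ℂ := ⟨p.1, p.2⟩ with hz
  have habs : ‖z‖ = rad p := by
    rw [Complex.norm_def, Complex.normSq_apply]
    unfold rad; congr 1; simp only [hz]; ring
  have hz0 : z ≠ 0 := by
    intro h0
    rw [h0, norm_zero] at habs
    exact hp.ne habs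
  refine ⟨Complex.arg z, Complex.neg_pi_lt_arg z, Complex.arg_le_pi z, ?_⟩
  have hcos := Complex.cos_arg hz0
  have hsin := Complex.sin_arg z
  have hne : rad p ≠ 0 := hp.ne'
  unfold pt
  rw [hcos, hsin, habs]
  apply Prod.ext <;> simp only [hz] <;> field_simp

lemma extS_preconnected {ρ : ℝ} (hρ : 0 ≤ ρ) : IsPreconnected (extS ρ) := by
  have himg : (fun q : ℝ × ℝ => pt q.1 q.2) '' (Ioi ρ ×ˢ (univ : Set ℝ)) = extS ρ := by
    apply Subset.antisymm
    · rintro _ ⟨⟨a, θ⟩, ⟨ha, -⟩, rfl⟩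
      show ρ < rad (pt a θ)
      rw [rad_pt]
      calc ρ < a := ha
        _ ≤ |a| := le_abs_self a
    · intro p hp
      have hp' : ρ < rad p := hp
      have hrad0 : 0 < rad p := lt_of_le_of_lt hρ hp'
      obtain ⟨θ, _, _, hrep⟩ := polar_rep hrad0
      exact ⟨(rad p, θ), ⟨hp', mem_univ _⟩, hrep.symm⟩
  rw [← himg]
  exact (isPreconnected_Ioi.prod isPreconnected_univ).image _
    (Continuous.continuousOn (by unfold pt; fun_prop))

lemma closure_extS {ρ : ℝ} : closure (extS ρ) ⊆ {p | ρ ≤ rad p} :=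
  closure_minimal (fun p hp => show ρ ≤ rad p from le_of_lt hp)
    (isClosed_le continuous_const continuous_rad)

lemma mem_closure_extS {ρ θ : ℝ} (hρ : 0 < ρ) : pt ρ θ ∈ closure (extS ρ) := by
  have htend : Filter.Tendsto (fun n : ℕ => pt (ρ * (1 + 1/(n+1))) θ) Filter.atTop
      (nhds (pt ρ θ)) := by
    have h1 : Filter.Tendsto (fun n : ℕ => ρ * (1 + 1/((n:ℝ)+1))) Filter.atTop (nhds ρ) := by
      have h0 := tendsto_one_div_add_atTop_nhds_zero_nat (𝕜 := ℝ)
      have h2 := ((tendsto_const_nhds (x := (1:ℝ))).add h0).const_mul ρ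
      simpa using h2
    have hc : Continuous (fun x : ℝ => pt x θ) := by unfold pt; fun_prop
    exact (hc.continuousAt.tendsto.comp h1)
  apply mem_closure_of_tendsto htend
  filter_upwards with n
  show ρ < rad (pt (ρ * (1 + 1/((n:ℝ)+1))) θ)
  rw [rad_pt]
  have hpos : (0:ℝ) < 1/((n:ℝ)+1) := by positivity
  rw [abs_of_pos (by nlinarith)]
  nlinarith

lemma extS_unbounded {ρ : ℝ} (hρ : 0 ≤ ρ) : ¬ Bornology.IsBounded (extS ρ) := by
  intro hb
  obtain ⟨C, hC⟩ := isBounded_iff_forall_norm_le.mp hb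
  set x := max C ρ + 1 with hx
  have hxρ : ρ < x := by have := le_max_right C ρ; simp only [hx]; linarith
  have hxC : C < x := by have := le_max_left C ρ; simp only [hx]; linarith
  have hx0 : 0 ≤ x := le_trans hρ hxρ.le
  have hmem : ((x, (0:ℝ)) : ℝ × ℝ) ∈ extS ρ := by
    show ρ < rad (x, 0)
    unfold rad
    simp only
    rw [show x^2 + (0:ℝ)^2 = x^2 by ring, Real.sqrt_sq hx0]
    exact hxρ
  have hno := hC _ hmem
  rw [Prod.norm_def] at hno
  simp only [norm_zero, Real.norm_eq_abs] at hno
  rw [abs_of_nonneg hx0] at hno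
  have : x ≤ C := le_trans (le_max_left _ _) hno
  linarith

lemma bounded_lt {ρ : ℝ} : Bornology.IsBounded {p : ℝ × ℝ | rad p < ρ} := by
  apply isBounded_iff_forall_norm_le.mpr
  refine ⟨ρ, fun p hp => ?_⟩
  have hp' : rad p < ρ := hp
  have h1 : |p.1| ≤ rad p := Real.abs_le_sqrt (by nlinarith [sq_nonneg p.2])
  have h2 : |p.2| ≤ rad p := Real.abs_le_sqrt (by nlinarith [sq_nonneg p.1])
  rw [Prod.norm_def]
  simp only [Real.norm_eq_abs]
  exact max_le (by linarith) (by linarith)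

def Sn (k n : ℕ) : Set (Fin k × Fin 3) := {x | n ≤ x.1.val}

lemma arc_sub_disk {k : ℕ} {e : Sym2 (Fin k × Fin 3)} (he : e ∈ (nestedTriangles k).edgeSet) :
    ∃ x, x ∈ e ∧ ∀ p ∈ ntArc e, rad p ≤ rr x.1.val := by
  obtain ⟨u, v, rfl, hne, hrel⟩ := edge_form he
  refine ⟨u, Sym2.mem_iff.mpr (Or.inl rfl), fun p hp => ?_⟩
  rcases hrel with ⟨h1, h2⟩ | ⟨h1, h2⟩
  · obtain ⟨t, ht0, ht1, rfl⟩ := (T_mem h1).mp hp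
    rw [rad_pt, abs_of_pos (rr_pos _)]
  · obtain ⟨t, ht0, ht1, rfl⟩ := (C_mem' h1).mp hp
    rw [rad_pt]
    have hjv : rr v.1.val = rr (u.1.val + 1) := by rw [h1]
    have hlt : rr (u.1.val + 1) < rr u.1.val := rr_anti (Nat.lt_succ_self _)
    have hbnd := interp_le (b := rr v.1.val) (a := rr u.1.val)
      (by rw [hjv]; exact hlt.le) ht0 ht1
    rw [abs_of_pos (interp_pos (rr_pos _) (rr_pos _) ht0 ht1)]
    exact hbnd.2

lemma restrict_drawnSet_sub {k n : ℕ} :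
    ((ntDrawing k).restrict (Sn k n)).drawnSet ⊆ {p | rad p ≤ rr n} := by
  intro p hp
  rcases hp with ⟨x, rfl⟩ | hp
  · show rad (ntPos x.val) ≤ rr n
    unfold ntPos
    rw [rad_pt, abs_of_pos (rr_pos _)]
    exact rr_anti.antitone x.2
  · simp only [mem_iUnion] at hp
    obtain ⟨e, he, hpe⟩ := hp
    obtain ⟨x, hxe, hb⟩ := arc_sub_disk (PlanarDrawing.induce_edge_mem he)
    have hx := hb p hpe
    obtain ⟨y, hy, hyx⟩ := Sym2.mem_map.mp hxe
    have hyn : n ≤ x.1.val := by rw [← hyx]; exact y.2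
    exact le_trans hx (rr_anti.antitone hyn)

lemma circle_sub_restrict {k n : ℕ} (hnk : n < k) :
    {p : ℝ × ℝ | rad p = rr n} ⊆ ((ntDrawing k).restrict (Sn k n)).drawnSet := by
  intro p hp
  have hp' : rad p = rr n := hp
  have hrad0 : 0 < rad p := hp' ▸ rr_pos n
  obtain ⟨θ, hθl, hθu, hrep⟩ := polar_rep hrad0
  rw [hp'] at hrep
  have hpi : 0 < Real.pi := Real.pi_pos
  have hw := w_pos
  obtain ⟨φ, hφ0, hφ3, hrep'⟩ : ∃ φ, 0 ≤ φ ∧ φ ≤ 3*w ∧ p = pt (rr n) φ := by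
    rcases le_or_gt 0 θ with h | h
    · exact ⟨θ, h, by rw [three_w]; linarith, hrep⟩
    · refine ⟨θ + 3*w, by rw [three_w]; linarith, by rw [three_w]; linarith, ?_⟩
      rw [pt_period]; exact hrep
  clear hrep
  obtain ⟨sidx, hs3, hts, h1s⟩ :
      ∃ s : ℕ, s < 3 ∧ (s:ℝ)*w ≤ φ ∧ φ ≤ ((s:ℝ)+1)*w := by
    rcases le_or_gt φ w with h | h
    · exact ⟨0, by norm_num, by simpa using hφ0, by norm_num; linarith⟩
    · rcases le_or_gt φ (2*w) with h' | h'
      · exact ⟨1, by norm_num, by push_cast; linarith, by push_cast; linarith⟩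
      · exact ⟨2, by norm_num, by push_cast; linarith, by push_cast; linarith⟩
  set c : Fin 3 := ⟨sidx, hs3⟩ with hc
  have hmem : p ∈ cS (rr n) (rr n) (AA sidx) (AA sidx + w) := by
    apply mem_T.mpr
    refine ⟨(φ - sidx*w)/w, div_nonneg (by linarith) hw.le, ?_, ?_⟩
    · rw [div_le_one hw]; linarith
    · rw [hrep']
      congr 1
      unfold AA
      field_simp
      ring
  set iF : Fin k := ⟨n, hnk⟩ with hiF
  have hu : ((iF, c) : Fin k × Fin 3) ∈ Sn k n := le_refl n
  have hv : ((iF, c+1) : Fin k × Fin 3) ∈ Sn k n := le_refl n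
  have hadj : (nestedTriangles k).Adj (iF, c) (iF, c+1) := by
    rw [nestedTriangles, SimpleGraph.fromRel_adj]
    exact ⟨fun h => (fin3_succ_ne c) (congrArg Prod.snd h).symm,
      Or.inl (Or.inl ⟨rfl, fun h => (fin3_succ_ne c) h.symm⟩)⟩
  have he' : (s(⟨(iF,c),hu⟩, ⟨(iF,c+1),hv⟩) : Sym2 ↥(Sn k n)) ∈
      ((nestedTriangles k).induce (Sn k n)).edgeSet := by
    rw [SimpleGraph.mem_edgeSet]
    simpa using hadj
  refine Or.inr (mem_biUnion he' ?_)
  show p ∈ ntArc (Sym2.map Subtype.val s(⟨(iF,c),hu⟩, ⟨(iF,c+1),hv⟩))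
  rw [Sym2.map_pair_eq]
  show p ∈ ntArc s(((iF,c) : Fin k × Fin 3), ((iF,c+1) : Fin k × Fin 3))
  rw [ntArc_T (show ((iF,c) : Fin k × Fin 3).1 = ((iF,c+1) : Fin k × Fin 3).1 from rfl)]
  have htc : tS c (c+1) = sidx := tS_succ c
  show p ∈ cS (rr iF.val) (rr iF.val) (AA (tS c (c+1))) (AA (tS c (c+1)) + w)
  rw [htc]
  exact hmem

lemma peel_eq {k n : ℕ} (hnk : n < k) :
    (ntDrawing k).peelSet (Sn k n) = {x : Fin k × Fin 3 | x.1.val = n} := by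
  ext v
  simp only [PlanarDrawing.peelSet, mem_setOf_eq]
  constructor
  · rintro ⟨hvS, F, ⟨⟨x₀, hx₀, rfl⟩, hFu⟩, hclos⟩
    have hsub : (((ntDrawing k).restrict (Sn k n)).drawnSet)ᶜ ⊆
        {p | rad p < rr n} ∪ extS (rr n) := by
      intro p hp
      rcases lt_trichotomy (rad p) (rr n) with h | h | h
      · exact Or.inl h
      · exact absurd (circle_sub_restrict hnk h) hp
      · exact Or.inr h
    have hdisj : Disjoint {p : ℝ × ℝ | rad p < rr n} (extS (rr n)) := by
      rw [Set.disjoint_left]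
      intro p h1 h2
      have h1' : rad p < rr n := h1
      have h2' : rr n < rad p := h2
      linarith
    have hFsub := (connectedComponentIn_subset _ x₀).trans hsub
    rcases isPreconnected_connectedComponentIn.subset_or_subset
        (isOpen_lt continuous_rad continuous_const) (isOpen_extS _) hdisj hFsub with hF | hF
    · exact absurd (bounded_lt.subset hF) hFu
    · have h1 : ((ntDrawing k).restrict (Sn k n)).pos ⟨v, hvS⟩ ∈ {p | rr n ≤ rad p} :=
        closure_extS ((closure_mono hF) hclos)
      have h2 : rr n ≤ rr v.1.val := by
        have hradv : rad (ntPos v) = rr v.1.val := by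
          unfold ntPos; rw [rad_pt, abs_of_pos (rr_pos _)]
        rw [← hradv]; exact h1
      exact le_antisymm (rr_le_iff.mp h2) hvS
  · intro hv
    have hvS : v ∈ Sn k n := le_of_eq hv.symm
    set x₀ : ℝ × ℝ := pt (rr n + 1) 0 with hx₀def
    have hx₀rad : rad x₀ = rr n + 1 := by
      rw [hx₀def, rad_pt, abs_of_pos (by have := rr_pos n; linarith)]
    have hx₀ : x₀ ∉ ((ntDrawing k).restrict (Sn k n)).drawnSet := by
      intro hmem
      have h2 : rad x₀ ≤ rr n := restrict_drawnSet_sub hmem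
      rw [hx₀rad] at h2
      have := rr_pos n
      linarith
    have hextsub : extS (rr n) ⊆ (((ntDrawing k).restrict (Sn k n)).drawnSet)ᶜ := by
      intro p hp hmem
      have h2 : rad p ≤ rr n := restrict_drawnSet_sub hmem
      have hp' : rr n < rad p := hp
      linarith
    have hx₀ext : x₀ ∈ extS (rr n) := by
      show rr n < rad x₀
      rw [hx₀rad]; linarith
    have hcomp : extS (rr n) ⊆
        connectedComponentIn ((((ntDrawing k).restrict (Sn k n)).drawnSet)ᶜ) x₀ :=
      (extS_preconnected (rr_pos n).le).subset_connectedComponentIn hx₀ext hextsub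
    refine ⟨hvS, connectedComponentIn ((((ntDrawing k).restrict (Sn k n)).drawnSet)ᶜ) x₀,
      ⟨⟨x₀, hx₀, rfl⟩, ?_⟩, ?_⟩
    · intro hb
      exact extS_unbounded (rr_pos n).le (hb.subset hcomp)
    · show ((ntDrawing k).restrict (Sn k n)).pos ⟨v, hvS⟩ ∈ closure _
      have hform : ((ntDrawing k).restrict (Sn k n)).pos ⟨v, hvS⟩ = pt (rr n) (AA v.2.val) := by
        show ntPos v = _
        unfold ntPos
        rw [show v.1.val = n from hv]
      rw [hform]
      exact (closure_mono hcomp) (mem_closure_extS (rr_pos n))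

lemma remaining_eq {k : ℕ} : ∀ n ≤ k, (ntDrawing k).remaining n = Sn k n := by
  intro n
  induction n with
  | zero =>
      intro _
      show (univ : Set (Fin k × Fin 3)) = Sn k 0
      ext x; simp [Sn]
  | succ m ih =>
      intro hm
      have hmk : m < k := hm
      show (ntDrawing k).remaining m \ (ntDrawing k).peelSet ((ntDrawing k).remaining m) = _
      rw [ih (le_of_lt hmk), peel_eq hmk]
      ext x
      simp only [Sn, mem_diff, mem_setOf_eq]
      omega

end NTproof2


section NTconn

lemma nt_conn {k : ℕ} (hk : 1 ≤ k) (s : Set (Fin k × Fin 3)) (hcard : s.ncard ≤ 2) :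
    ((nestedTriangles k).induce (sᶜ : Set (Fin k × Fin 3))).Connected := by
  classical
  have pne : ∀ (a b : Fin k) (c d : Fin 3), c ≠ d → ((a,c) : Fin k × Fin 3) ≠ (b,d) :=
    fun a b c d hcd h => hcd (congrArg Prod.snd h)
  have key3 : ∀ a b c : Fin k × Fin 3, a ∈ s → b ∈ s → c ∈ s →
      a ≠ b → a ≠ c → b ≠ c → False := by
    intro a b c ha hb hc hab hac hbc
    have hsub : ({a, b, c} : Set (Fin k × Fin 3)) ⊆ s := by
      intro x hx
      rcases hx with rfl | rfl | rfl
      exacts [ha, hb, hc]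
    have h3 : ({a, b, c} : Set (Fin k × Fin 3)).ncard = 3 := by
      rw [Set.ncard_insert_of_notMem (by simp [hab, hac]),
        Set.ncard_insert_of_notMem (by simp [hbc]), Set.ncard_singleton]
    have := Set.ncard_le_ncard hsub (Set.toFinite s)
    omega
  have hvert : ∀ i : Fin k, ∃ c : Fin 3, ((i, c) : Fin k × Fin 3) ∉ s := by
    intro i
    by_contra h
    push_neg at h
    exact key3 (i,0) (i,1) (i,2) (h 0) (h 1) (h 2)
      (pne _ _ _ _ (by decide)) (pne _ _ _ _ (by decide)) (pne _ _ _ _ (by decide))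
  have hcross : ∀ i j : Fin k, j.val = i.val + 1 →
      ∃ c : Fin 3, ((i, c) : Fin k × Fin 3) ∉ s ∧ ((j, c) : Fin k × Fin 3) ∉ s := by
    intro i j _
    by_contra h
    push_neg at h
    have h' : ∀ c : Fin 3, ((i, c) : Fin k × Fin 3) ∈ s ∨ ((j, c) : Fin k × Fin 3) ∈ s := by
      intro c
      by_cases h1 : ((i, c) : Fin k × Fin 3) ∈ s
      · exact Or.inl h1
      · exact Or.inr (h c h1)
    rcases h' 0 with h0 | h0 <;> rcases h' 1 with h1 | h1 <;> rcases h' 2 with h2 | h2 <;>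
      exact key3 _ _ _ h0 h1 h2 (pne _ _ _ _ (by decide)) (pne _ _ _ _ (by decide))
        (pne _ _ _ _ (by decide))
  have adj_same : ∀ (i : Fin k) (c d : Fin 3), c ≠ d →
      (nestedTriangles k).Adj (i,c) (i,d) := by
    intro i c d hcd
    rw [nestedTriangles, SimpleGraph.fromRel_adj]
    exact ⟨pne _ _ _ _ hcd, Or.inl (Or.inl ⟨rfl, hcd⟩)⟩
  have adj_cross : ∀ (i j : Fin k) (c : Fin 3), j.val = i.val + 1 →
      (nestedTriangles k).Adj (i,c) (j,c) := by
    intro i j c hij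
    rw [nestedTriangles, SimpleGraph.fromRel_adj]
    refine ⟨fun h => by have := congrArg (fun x : Fin k × Fin 3 => x.1.val) h; simp at this; omega,
      Or.inl (Or.inr ⟨hij.symm, Or.inl rfl⟩)⟩
  set G' := (nestedTriangles k).induce (sᶜ : Set (Fin k × Fin 3)) with hG'
  have adj_ind : ∀ (a b : Fin k × Fin 3) (ha : a ∈ (sᶜ : Set (Fin k × Fin 3)))
      (hb : b ∈ (sᶜ : Set (Fin k × Fin 3))), (nestedTriangles k).Adj a b →
      G'.Adj ⟨a, ha⟩ ⟨b, hb⟩ := by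
    intro a b ha hb h
    simpa [hG'] using h
  obtain ⟨c₀, hc₀⟩ := hvert ⟨0, hk⟩
  have hc₀' : ((⟨0, hk⟩ : Fin k), c₀) ∈ (sᶜ : Set (Fin k × Fin 3)) := hc₀
  have hreach : ∀ (i : ℕ) (a : Fin k × Fin 3) (ha : a ∈ (sᶜ : Set (Fin k × Fin 3))),
      a.1.val = i → G'.Reachable ⟨a, ha⟩ ⟨((⟨0, hk⟩ : Fin k), c₀), hc₀'⟩ := by
    intro i
    induction i with
    | zero =>
        intro a ha hval
        have h1 : a.1 = ⟨0, hk⟩ := Fin.ext hval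
        by_cases h2 : a.2 = c₀
        · have : a = ((⟨0, hk⟩ : Fin k), c₀) := Prod.ext h1 h2
          rw [show (⟨a, ha⟩ : ↥(sᶜ : Set (Fin k × Fin 3))) =
            ⟨((⟨0, hk⟩ : Fin k), c₀), hc₀'⟩ from Subtype.ext this]
        · have hadj : (nestedTriangles k).Adj a ((⟨0, hk⟩ : Fin k), c₀) := by
            rw [nestedTriangles, SimpleGraph.fromRel_adj]
            exact ⟨fun h => h2 (congrArg Prod.snd h), Or.inl (Or.inl ⟨h1, h2⟩)⟩
          exact (adj_ind _ _ _ _ hadj).reachable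
    | succ m ih =>
        intro a ha hval
        have hmk : m + 1 < k := hval ▸ a.1.isLt
        set iF : Fin k := ⟨m, by omega⟩ with hiF
        obtain ⟨c, hic, hjc⟩ := hcross iF a.1 (by rw [hval])
        have hjc' : ((a.1, c) : Fin k × Fin 3) ∈ (sᶜ : Set (Fin k × Fin 3)) := hjc
        have hic' : ((iF, c) : Fin k × Fin 3) ∈ (sᶜ : Set (Fin k × Fin 3)) := hic
        have hya : G'.Reachable ⟨a, ha⟩ ⟨(a.1, c), hjc'⟩ := by
          by_cases h2 : a.2 = c
          · rw [show (⟨a, ha⟩ : ↥(sᶜ : Set (Fin k × Fin 3))) = ⟨(a.1, c), hjc'⟩ from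
              Subtype.ext (Prod.ext rfl h2)]
          · have hadj : (nestedTriangles k).Adj a (a.1, c) := by
              rw [nestedTriangles, SimpleGraph.fromRel_adj]
              exact ⟨fun h => h2 (congrArg Prod.snd h), Or.inl (Or.inl ⟨rfl, h2⟩)⟩
            exact (adj_ind _ _ _ _ hadj).reachable
        have hyx : G'.Adj ⟨(a.1, c), hjc'⟩ ⟨(iF, c), hic'⟩ :=
          adj_ind _ _ _ _ (adj_cross iF a.1 c (by rw [hval])).symm
        exact hya.trans (hyx.reachable.trans (ih (iF, c) hic' rfl))
  haveI : Nonempty ↥(sᶜ : Set (Fin k × Fin 3)) := ⟨⟨((⟨0, hk⟩ : Fin k), c₀), hc₀'⟩⟩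
  exact SimpleGraph.Connected.mk
    (fun x y => (hreach _ x.val x.2 rfl).trans (hreach _ y.val y.2 rfl).symm)

end NTconn


/-- `T_k`, the graph of `k` nested triangles joined by 6-cycles, is
3-connected (no separator of at most two vertices), and in the embedding with
the outermost triangle as outer face it has exactly `k` onion peels, the
`i`-th peel being the `i`-th triangle from the outside. -/
theorem nestedTriangles_threeConnected_peels (k : ℕ) (hk : 1 ≤ k) :
    (∀ s : Set (Fin k × Fin 3), s.ncard ≤ 2 →
      ((nestedTriangles k).induce (sᶜ : Set (Fin k × Fin 3))).Connected) ∧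
    ∃ D : PlanarDrawing (nestedTriangles k),
      (∀ i : ℕ, i < k → D.peel i = {x : Fin k × Fin 3 | x.1.val = i}) ∧
      D.remaining k = ∅ := by
  constructor
  · intro s hs
    exact nt_conn hk s hs
  · refine ⟨ntDrawing k, ?_, ?_⟩
    · intro i hik
      show (ntDrawing k).peelSet ((ntDrawing k).remaining i) = _
      rw [remaining_eq i (le_of_lt hik), peel_eq hik]
    · rw [remaining_eq k le_rfl]
      ext x
      simp only [Sn, mem_setOf_eq, mem_empty_iff_false, iff_false, not_le]
      exact x.1.isLt
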